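/- Let H, K be nontrivial groups with h₁, h₂ ∈ H \ {e} satisfying h₁h₂ ≠ e, and k ∈ K \ {e}. In the free product G = H ∗ K, the elements h₁k and k⁻¹h₂ lie outside ⋃_{g∈G} gHg⁻¹, but their product h₁h₂ lies in H; hence the Frobenius kernel of the malnormal subgroup H in G is not a subgroup. -/

import Mathlib

def IsMalnormal {G : Type*} [Group G] (H : Subgroup G) : Prop :=
  ∀ g : G, g ∉ H → ∀ x : G, x ∈ H → g⁻¹ * x * g ∈ H → x = 1

namespace FKAux

open Monoid Monoid.CoprodI List

variable {ι : Type*} {M : ι → Type*} [∀ i, Group (M i)]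

/-- Inverse of a letter. -/
def linv : (Σ i, M i) → (Σ i, M i) := fun c => ⟨c.1, c.2⁻¹⟩

@[simp] lemma linv_fst (c : Σ i, M i) : (linv c).1 = c.1 := rfl

/-- Product of a list of letters in the free product. -/
def lprod (l : List (Σ i, M i)) : CoprodI M :=
  (l.map fun c => Monoid.CoprodI.of c.2).prod

@[simp] lemma lprod_nil : lprod ([] : List (Σ i, M i)) = 1 := rfl

@[simp] lemma lprod_cons (c : Σ i, M i) (l : List (Σ i, M i)) :
    lprod (c :: l) = Monoid.CoprodI.of c.2 * lprod l := by
  simp [lprod]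

@[simp] lemma lprod_append (l₁ l₂ : List (Σ i, M i)) :
    lprod (l₁ ++ l₂) = lprod l₁ * lprod l₂ := by
  simp [lprod]

lemma word_prod_eq (w : Word M) : w.prod = lprod w.toList := rfl

omit [∀ i, Group (M i)] in
lemma chain_ne_of_fst_eq {l₁ l₂ : List (Σ i, M i)}
    (h : l₁.map Sigma.fst = l₂.map Sigma.fst)
    (hc : l₁.Chain' fun a b => a.1 ≠ b.1) :
    l₂.Chain' fun a b => a.1 ≠ b.1 := by
  have h₁ : (l₁.map Sigma.fst).Chain' Ne := (List.isChain_map _).mpr hc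
  rw [h] at h₁
  exact (List.isChain_map _).mp h₁

theorem step {j : ι} (m : M j) (w : Word M)
    (u : List (Σ i, M i)) (c : Σ i, M i)
    (hl : w.toList = u ++ c :: (u.map linv).reverse) :
    ∃ (w' : Word M) (u' : List (Σ i, M i)) (c' : Σ i, M i),
      w'.toList = u' ++ c' :: (u'.map linv).reverse ∧
      w'.prod = Monoid.CoprodI.of m * w.prod * (Monoid.CoprodI.of m)⁻¹ := by
  by_cases hm : m = 1
  · exact ⟨w, u, c, hl, by simp [hm]⟩
  match u with
  | [] =>
    obtain ⟨i, a⟩ := c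
    have ha : a ≠ 1 := w.ne_one ⟨i, a⟩ (by rw [hl]; simp)
    have hw : w.prod = Monoid.CoprodI.of a := by
      rw [word_prod_eq, hl]; simp
    by_cases hji : j = i
    · subst hji
      have hconj : m * a * m⁻¹ ≠ 1 := by
        intro e
        apply ha
        have := congrArg (fun x => m⁻¹ * x * m) e
        simpa [mul_assoc] using this
      refine ⟨⟨[⟨j, m * a * m⁻¹⟩], ?_, ?_⟩, [], ⟨j, m * a * m⁻¹⟩, by simp, ?_⟩
      · intro l hl'
        simp only [List.mem_singleton] at hl'
        subst hl'
        exact hconj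
      · simp
      · rw [word_prod_eq]
        simp [hw, map_mul, mul_assoc]
    · refine ⟨⟨[⟨j, m⟩, ⟨i, a⟩, ⟨j, m⁻¹⟩], ?_, ?_⟩, [⟨j, m⟩], ⟨i, a⟩,
        by simp [linv], ?_⟩
      · intro l hl'
        simp only [List.mem_cons, List.mem_singleton] at hl'
        rcases hl' with rfl | rfl | rfl | h
        · exact hm
        · exact ha
        · exact inv_ne_one.2 hm
        · exact absurd h List.not_mem_nil
      · refine List.isChain_cons_cons.2 ⟨hji, List.isChain_cons_cons.2 ⟨Ne.symm hji, ?_⟩⟩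
        simp
      · rw [word_prod_eq]
        simp [hw, mul_assoc]
  | ⟨i, a⟩ :: u' =>
    have hl' : w.toList =
        ⟨i, a⟩ :: ((u' ++ c :: (u'.map linv).reverse) ++ [⟨i, a⁻¹⟩]) := by
      rw [hl]; simp [linv]
    set mid := u' ++ c :: (u'.map linv).reverse with hmid_def
    have hmid_ne : mid ≠ [] := by
      simp [hmid_def]
    have ha : a ≠ 1 := w.ne_one ⟨i, a⟩ (by rw [hl']; simp)
    have hmem_mid : ∀ l ∈ mid, l.2 ≠ (1 : M l.1) := by
      intro l hml
      exact w.ne_one l (by rw [hl']; simp [hml])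
    have hch : (⟨i, a⟩ :: (mid ++ [⟨i, a⁻¹⟩]) :
        List (Σ i, M i)).Chain' fun l l' => l.1 ≠ l'.1 := hl' ▸ w.chain_ne
    change List.IsChain _ _ at hch; rw [List.isChain_cons, List.isChain_append] at hch
    obtain ⟨hhead, hchmid, -, hlast⟩ := hch
    have hhead' : ∀ y ∈ mid.head?, i ≠ y.1 := by
      intro y hy
      exact hhead y (by
        rcases mid with - | ⟨z, zs⟩
        · exact absurd rfl hmid_ne
        · simpa using hy)
    have hlast' : ∀ x ∈ mid.getLast?, x.1 ≠ i := by
      intro x hx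
      exact hlast x hx ⟨i, a⁻¹⟩ rfl
    have hwprod : w.prod =
        Monoid.CoprodI.of a * lprod mid * (Monoid.CoprodI.of a)⁻¹ := by
      rw [word_prod_eq, hl']
      simp [mul_assoc]
    by_cases hji : j = i
    · subst hji
      by_cases hma : m * a = 1
      · have hm_eq : m = a⁻¹ := eq_inv_of_mul_eq_one_left hma
        refine ⟨⟨mid, hmem_mid, hchmid⟩, u', c, rfl, ?_⟩
        rw [word_prod_eq]
        show lprod mid = _
        rw [hwprod, hm_eq]
        simp [mul_assoc]
      · refine ⟨⟨⟨j, m * a⟩ :: (mid ++ [⟨j, (m * a)⁻¹⟩]), ?_, ?_⟩,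
          ⟨j, m * a⟩ :: u', c, ?_, ?_⟩
        · intro l hml
          simp only [List.mem_cons, List.mem_append, List.mem_singleton] at hml
          rcases hml with rfl | hml | rfl | h'
          · exact hma
          · exact hmem_mid _ hml
          · exact inv_ne_one.2 hma
          · exact absurd h' List.not_mem_nil
        · refine chain_ne_of_fst_eq (l₁ := w.toList) ?_ w.chain_ne
          rw [hl']
          simp
        · show _ = (⟨j, m * a⟩ :: u') ++ c :: _
          simp [linv, hmid_def]
        · rw [word_prod_eq]
          show lprod (⟨j, m * a⟩ :: (mid ++ [⟨j, (m * a)⁻¹⟩])) = _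
          rw [hwprod]
          simp [mul_assoc]
    · refine ⟨⟨⟨j, m⟩ :: (w.toList ++ [⟨j, m⁻¹⟩]), ?_, ?_⟩,
        ⟨j, m⟩ :: (⟨i, a⟩ :: u'), c, ?_, ?_⟩
      · intro l hml
        simp only [List.mem_cons, List.mem_append, List.mem_singleton] at hml
        rcases hml with rfl | hml | rfl | h'
        · exact hm
        · exact w.ne_one _ hml
        · exact inv_ne_one.2 hm
        · exact absurd h' List.not_mem_nil
      · refine List.isChain_cons.2 ⟨?_, ?_⟩
        · intro y hy
          rw [hl'] at hy
          simp only [List.cons_append, List.head?_cons, Option.mem_some_iff] at hy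
          subst hy
          exact hji
        · refine List.isChain_append.2 ⟨w.chain_ne, List.isChain_singleton _, ?_⟩
          intro x hx y hy
          simp only [List.head?_cons, Option.mem_some_iff] at hy
          subst hy
          rw [hl'] at hx
          have : x = ⟨i, a⁻¹⟩ := by
            have : (⟨i, a⟩ :: (mid ++ [⟨i, a⁻¹⟩]) :
                List (Σ i, M i)).getLast? = some ⟨i, a⁻¹⟩ := by
              rw [show (⟨i, a⟩ :: (mid ++ [⟨i, a⁻¹⟩]) : List (Σ i, M i)) =
                (⟨i, a⟩ :: mid) ++ [⟨i, a⁻¹⟩] by simp]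
              exact List.getLast?_concat
            rw [this] at hx
            exact (Option.mem_some_iff.mp hx).symm
          subst this
          exact Ne.symm hji
      · show ⟨j, m⟩ :: (w.toList ++ [⟨j, m⁻¹⟩]) = _
        rw [hl]
        simp [linv]
      · rw [word_prod_eq]
        show lprod (⟨j, m⟩ :: (w.toList ++ [⟨j, m⁻¹⟩])) = _
        rw [word_prod_eq]
        simp [mul_assoc]

theorem conj_shape (g : CoprodI M) {l : ι} (h : M l) (hne : h ≠ 1) :
    ∃ (w : Word M) (u : List (Σ i, M i)) (c : Σ i, M i),
      w.toList = u ++ c :: (u.map linv).reverse ∧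
      w.prod = g * Monoid.CoprodI.of h * g⁻¹ := by
  induction g using Monoid.CoprodI.induction_left with
  | one =>
    refine ⟨⟨[⟨l, h⟩], ?_, ?_⟩, [], ⟨l, h⟩, by simp, ?_⟩
    · intro x hx
      simp only [List.mem_singleton] at hx
      subst hx
      exact hne
    · simp
    · rw [word_prod_eq]
      simp
  | mul m x ih =>
    obtain ⟨w, u, c, hlist, hprod⟩ := ih
    obtain ⟨w', u', c', hl', hp'⟩ := step m w u c hlist
    refine ⟨w', u', c', hl', ?_⟩
    rw [hp', hprod]
    simp [mul_assoc]

theorem key {i j l : ι} (hij : i ≠ j) {a : M i} {b : M j}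
    (ha : a ≠ 1) (hb : b ≠ 1) (g : CoprodI M) (h : M l) :
    Monoid.CoprodI.of a * Monoid.CoprodI.of b ≠
      g * Monoid.CoprodI.of h * g⁻¹ := by
  classical
  intro heq
  have hne2 : ∀ x ∈ ([⟨i, a⟩, ⟨j, b⟩] : List (Σ i, M i)), x.2 ≠ (1 : M x.1) := by
    intro x hx
    simp only [List.mem_cons, List.mem_singleton] at hx
    rcases hx with rfl | rfl | h'
    · exact ha
    · exact hb
    · exact absurd h' List.not_mem_nil
  have hch2 : ([⟨i, a⟩, ⟨j, b⟩] : List (Σ i, M i)).Chain'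
      fun l l' => l.1 ≠ l'.1 := by
    refine List.isChain_cons_cons.2 ⟨hij, ?_⟩
    simp
  set w₂ : Word M := ⟨[⟨i, a⟩, ⟨j, b⟩], hne2, hch2⟩ with hw₂_def
  have hw₂ : w₂.prod = Monoid.CoprodI.of a * Monoid.CoprodI.of b := by
    rw [word_prod_eq]
    simp [hw₂_def]
  obtain ⟨w, u, c, hlist, hprod⟩ := conj_shape g h (by
    rintro rfl
    apply hb
    have : Monoid.CoprodI.of a * Monoid.CoprodI.of b = 1 := by
      simpa using heq
    -- derive contradiction: w₂ = empty
    have hinj : w₂ = Word.empty := by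
      apply Word.equiv.symm.injective
      show w₂.prod = Word.prod Word.empty
      rw [hw₂, Word.prod_empty, this]
    have := congrArg (fun w : Word M => w.toList) hinj
    simp [hw₂_def, Word.empty] at this)
  have hww : w = w₂ := by
    apply Word.equiv.symm.injective
    show w.prod = w₂.prod
    rw [hprod, hw₂]
    exact heq.symm
  have hlen : w.toList.length = 2 := by
    rw [hww]
    rfl
  rw [hlist] at hlen
  simp only [List.length_append, List.length_cons, List.length_reverse,
    List.length_map] at hlen
  omega

end FKAux

section Bridge

universe u v

/-- The two factors indexed by `Bool`. -/
def FKFac (H : Type u) (K : Type v) : Bool → Type (max u v) :=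
  fun b => Bool.rec (ULift.{v} H) (ULift.{u} K) b

instance fkFacGroup {H : Type u} {K : Type v} [Group H] [Group K] (b : Bool) :
    Group (FKFac H K b) :=
  b.rec (inferInstanceAs (Group (ULift H))) (inferInstanceAs (Group (ULift K)))

/-- The comparison homomorphism from the binary coproduct to the indexed coproduct. -/
def fkHom {H : Type u} {K : Type v} [Group H] [Group K] :
    Monoid.Coprod H K →* Monoid.CoprodI (FKFac H K) :=
  Monoid.Coprod.lift
    ((Monoid.CoprodI.of (M := FKFac H K) (i := false)).comp
      (MulEquiv.ulift.symm : H ≃* ULift H).toMonoidHom)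
    ((Monoid.CoprodI.of (M := FKFac H K) (i := true)).comp
      (MulEquiv.ulift.symm : K ≃* ULift K).toMonoidHom)

@[simp] lemma fkHom_inl {H : Type u} {K : Type v} [Group H] [Group K] (h : H) :
    fkHom (Monoid.Coprod.inl h) =
      Monoid.CoprodI.of (M := FKFac H K) (i := false) (ULift.up h) :=
  Monoid.Coprod.lift_apply_inl _ _ _

@[simp] lemma fkHom_inr {H : Type u} {K : Type v} [Group H] [Group K] (x : K) :
    fkHom (Monoid.Coprod.inr x) =
      Monoid.CoprodI.of (M := FKFac H K) (i := true) (ULift.up x) :=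
  Monoid.Coprod.lift_apply_inr _ _ _

lemma ulift_up_ne_one {H : Type u} [Group H] {h : H} (hh : h ≠ 1) :
    (ULift.up h : ULift.{v} H) ≠ 1 := by
  intro e
  exact hh (congrArg ULift.down e)

end Bridge

open Monoid.Coprod in
theorem frobenius_kernel_not_subgroup_in_free_product
    {H K : Type*} [Group H] [Group K]
    (h₁ h₂ : H) (hh₁ : h₁ ≠ 1) (hh₂ : h₂ ≠ 1) (hprod : h₁ * h₂ ≠ 1)
    (k : K) (hk : k ≠ 1) :
    (∀ g : Monoid.Coprod H K,
        g⁻¹ * (inl h₁ * inr k) * g ∉ (inl : H →* Monoid.Coprod H K).range) ∧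
    (∀ g : Monoid.Coprod H K,
        g⁻¹ * (inr k⁻¹ * inl h₂) * g ∉ (inl : H →* Monoid.Coprod H K).range) ∧
    (inl h₁ * inr k) * (inr k⁻¹ * inl h₂) = (inl (h₁ * h₂) : Monoid.Coprod H K) ∧
    (inl (h₁ * h₂) : Monoid.Coprod H K) ∈ (inl : H →* Monoid.Coprod H K).range ∧
    (inl (h₁ * h₂) : Monoid.Coprod H K) ≠ 1 := by
  have hft : (false : Bool) ≠ true := by simp
  refine ⟨?_, ?_, ?_, ⟨h₁ * h₂, rfl⟩, ?_⟩
  · intro g hmem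
    obtain ⟨h, hh⟩ := hmem
    have hx : inl h₁ * inr k = g * inl h * g⁻¹ := by
      rw [hh]
      group
    have := congrArg fkHom hx
    simp only [map_mul, map_inv, fkHom_inl, fkHom_inr] at this
    exact FKAux.key (l := false) hft (ulift_up_ne_one hh₁) (ulift_up_ne_one hk) (fkHom g)
      (ULift.up h) (by simpa using this)
  · intro g hmem
    obtain ⟨h, hh⟩ := hmem
    have hx : inr k⁻¹ * inl h₂ = g * inl h * g⁻¹ := by
      rw [hh]
      group
    have := congrArg fkHom hx
    simp only [map_mul, map_inv, fkHom_inl, fkHom_inr] at this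
    exact FKAux.key (l := false) (Ne.symm hft) (ulift_up_ne_one (inv_ne_one.2 hk))
      (ulift_up_ne_one hh₂) (fkHom g) (ULift.up h) (by rw [← this]; exact congrArg (· * _) (map_inv (Monoid.CoprodI.of (M := FKFac H K) (i := true)) (ULift.up k)).symm)
  · rw [mul_assoc, ← mul_assoc (inr k), ← map_mul, mul_inv_cancel, map_one,
      one_mul, ← map_mul]
  · intro e
    exact hprod (inl_injective (e.trans (map_one (inl : H →* Monoid.Coprod H K)).symm))
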